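/- Let F and K be linear ordered fields with order positive presentations ν : ℕ → F and μ : ℕ → K respectively, let i : F → K be an order-preserving ring embedding such that every element of K is algebraic over the image i(F), and suppose ν is reducible to μ, i.e., there is a computable function h : ℕ → ℕ with μ(h n) = i(ν n) for all n. If U ⊆ K is effectively open with respect to μ, then the preimage i⁻¹(U) = {x ∈ F | i(x) ∈ U} is effectively open with respect to ν. -/

import Mathlib

/-- A set of natural numbers is computably enumerable if it is the domain of some
partial computable function `ℕ →. ℕ`. -/
def CESet (S : Set ℕ) : Prop :=
  ∃ g : ℕ →. ℕ, Partrec g ∧ ∀ n, (g n).Dom ↔ n ∈ S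

/-- `ν : ℕ → F` is an order positive presentation of the linear ordered field `F`:
`ν` is surjective, addition and multiplication are computable with respect to `ν`,
the strict order is computably enumerable and inversion of nonzero elements is
partially computable. -/
structure OrderPosPres (F : Type*) [Field F] [LinearOrder F] [IsStrictOrderedRing F] (ν : ℕ → F) : Prop where
  surj : Function.Surjective ν
  add : ∃ a : ℕ → ℕ → ℕ, Computable₂ a ∧ ∀ n k, ν (a n k) = ν n + ν k
  mul : ∃ m : ℕ → ℕ → ℕ, Computable₂ m ∧ ∀ n k, ν (m n k) = ν n * ν k
  lt : CESet {p : ℕ | ∃ n k, p = Nat.pair n k ∧ ν n < ν k}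
  inv : ∃ g : ℕ →. ℕ, Partrec g ∧ ∀ n, ν n ≠ 0 → ∃ v ∈ g n, ν v = (ν n)⁻¹

/-- A set `U ⊆ F` is effectively open with respect to a presentation `ν` if it is the
union of an effectively enumerated family of open intervals with `ν`-computable
endpoints. -/
def EffOpen {F : Type*} [Field F] [LinearOrder F] [IsStrictOrderedRing F] (ν : ℕ → F) (U : Set F) : Prop :=
  ∃ W : Set ℕ, CESet W ∧
    (∀ p ∈ W, ν (Nat.unpair p).1 < ν (Nat.unpair p).2) ∧
    U = ⋃ p ∈ W, Set.Ioo (ν (Nat.unpair p).1) (ν (Nat.unpair p).2)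

open Nat.Partrec.Code in
lemma ceset_iff_bool {S : Set ℕ} :
    CESet S ↔ ∃ f : ℕ → ℕ → Bool, Computable₂ f ∧ ∀ n, n ∈ S ↔ ∃ m, f n m = true := by
  constructor
  · rintro ⟨g, hg, hdom⟩
    obtain ⟨c, hc⟩ := exists_code.1 (Partrec.nat_iff.1 hg)
    refine ⟨fun n m => (evaln m c n).isSome, ?_, fun n => ?_⟩
    · have : Primrec fun p : ℕ × ℕ => ((p.2, c), p.1) :=
        (Primrec.snd.pair (Primrec.const c)).pair Primrec.fst
      exact (Primrec.option_isSome.comp (primrec_evaln.comp this)).to_comp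
    · rw [← hdom]
      constructor
      · intro hd
        obtain ⟨k, hk⟩ := evaln_complete.1 (by rw [hc]; exact Part.get_mem hd)
        exact ⟨k, by simp [Option.isSome_iff_exists]; exact ⟨_, hk⟩⟩
      · rintro ⟨m, hm⟩
        obtain ⟨x, hx⟩ := Option.isSome_iff_exists.1 hm
        have := evaln_sound hx
        rw [hc] at this
        exact this.fst
  · rintro ⟨f, hf, hS⟩
    refine ⟨fun n => Nat.rfindOpt fun m => bif f n m then some 0 else none, ?_, fun n => ?_⟩
    · exact Partrec.rfindOpt (Computable.cond hf (Computable.const (some 0)) (Computable.const none))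
    · rw [Nat.rfindOpt_dom, hS n]
      constructor
      · rintro ⟨m, a, ha⟩
        refine ⟨m, ?_⟩
        cases hfm : f n m <;> simp [hfm] at ha ⊢
      · rintro ⟨m, hm⟩
        exact ⟨m, 0, by simp [hm]⟩

lemma small_elem {F K : Type*} [Field F] [LinearOrder F] [IsStrictOrderedRing F] [Field K] [LinearOrder K] [IsStrictOrderedRing K]
    (i : F →+* K) (hi : StrictMono i)
    (d : K) (hd : 0 < d)
    (p : Polynomial F) (hp : p ≠ 0) (hroot : Polynomial.eval₂ i d p = 0) :
    ∃ e : F, 0 < e ∧ i e < d := by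
  have habs : ∀ x : F, i |x| = |i x| := by
    intro x
    rcases le_total 0 x with hx | hx
    · rw [abs_of_nonneg hx, abs_of_nonneg (by simpa using hi.monotone hx)]
    · rw [abs_of_nonpos hx, map_neg, abs_of_nonpos (by simpa using hi.monotone hx)]
  rcases lt_or_ge 1 d with hd1 | hd1
  · refine ⟨2⁻¹, by norm_num, ?_⟩
    rw [map_inv₀, map_ofNat]
    calc (2:K)⁻¹ ≤ 1 := by norm_num
    _ < d := hd1
  -- reduce to nonzero constant coefficient by strong induction on natDegree
  have main : ∀ n (p : Polynomial F), p.natDegree = n → p ≠ 0 →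
      Polynomial.eval₂ i d p = 0 → ∃ e : F, 0 < e ∧ i e < d := by
    intro n
    induction n using Nat.strong_induction_on with
    | _ n IH =>
    intro p hn hp hroot
    rcases eq_or_ne (p.coeff 0) 0 with h0 | h0
    · obtain ⟨q, hq⟩ := Polynomial.X_dvd_iff.2 h0
      have hq0 : q ≠ 0 := fun hh => hp (by simp [hq, hh])
      have hqroot : Polynomial.eval₂ i d q = 0 := by
        have := hroot
        rw [hq, Polynomial.eval₂_mul, Polynomial.eval₂_X] at this
        rcases mul_eq_zero.1 this with hh | hh
        · exact absurd hh hd.ne'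
        · exact hh
      have hdeg : q.natDegree < n := by
        subst hn
        rw [hq, Polynomial.natDegree_mul Polynomial.X_ne_zero hq0, Polynomial.natDegree_X]
        omega
      exact IH q.natDegree hdeg q rfl hq0 hqroot
    · -- constant coefficient nonzero
      set n' := p.natDegree with hn'
      set B : F := ∑ j ∈ Finset.range n', |p.coeff (j + 1)| with hB
      have hsum : ∑ j ∈ Finset.range (n' + 1), i (p.coeff j) * d ^ j = 0 := by
        rw [← Polynomial.eval₂_eq_sum_range]; exact hroot
      rw [Finset.sum_range_succ'] at hsum
      have ha0 : i (p.coeff 0) = -∑ j ∈ Finset.range n', i (p.coeff (j + 1)) * d ^ (j + 1) := by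
        rw [eq_neg_iff_add_eq_zero]
        rw [add_comm]; simpa using hsum
      have hbound : |i (p.coeff 0)| ≤ i B * d := by
        rw [ha0, abs_neg, hB, map_sum, Finset.sum_mul]
        refine (Finset.abs_sum_le_sum_abs _ _).trans (Finset.sum_le_sum fun j _ => ?_)
        rw [abs_mul, abs_pow, abs_of_pos hd, ← habs]
        have h1 : d ^ (j + 1) ≤ d := by
          simpa using pow_le_pow_of_le_one hd.le hd1 (le_refl 1 |>.trans (Nat.le_add_left 1 j))
        have h2 : (0:K) ≤ i |p.coeff (j + 1)| := by
          rw [habs]; exact abs_nonneg _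
        calc i |p.coeff (j+1)| * d ^ (j+1) ≤ i |p.coeff (j+1)| * d :=
          mul_le_mul_of_nonneg_left h1 h2
        _ = _ := rfl
      have hia0 : 0 < |i (p.coeff 0)| := by
        rw [abs_pos]
        exact fun hh => h0 (hi.injective (by rw [hh, map_zero]))
      have hiB : 0 < i B := by
        rcases lt_or_ge 0 (i B) with hh | hh
        · exact hh
        · exfalso
          have : i B * d ≤ 0 := mul_nonpos_of_nonpos_of_nonneg hh hd.le
          linarith
      have hBpos : 0 < B := by
        have := hi.lt_iff_lt (a := 0) (b := B)
        rw [map_zero] at this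
        exact this.1 hiB
      refine ⟨|p.coeff 0| / B / 2, by positivity, ?_⟩
      have hdge : i (|p.coeff 0| / B) ≤ d := by
        rw [map_div₀, habs, div_le_iff₀ hiB, mul_comm]
        exact hbound
      have : i (|p.coeff 0| / B / 2) < i (|p.coeff 0| / B) := by
        apply hi
        have : 0 < |p.coeff 0| / B := by positivity
        linarith
      linarith
  exact main p.natDegree p rfl hp hroot

lemma between_left {F K : Type*} [Field F] [LinearOrder F] [IsStrictOrderedRing F] [Field K] [LinearOrder K] [IsStrictOrderedRing K]
    (i : F →+* K) (hi : StrictMono i)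
    (halg : ∀ x : K, ∃ p : Polynomial F, p ≠ 0 ∧ Polynomial.eval₂ i x p = 0)
    (c : K) (x : F) (h : c < i x) : ∃ y : F, c < i y ∧ y < x := by
  obtain ⟨p, hp, hroot⟩ := halg (i x - c)
  obtain ⟨e, he, hie⟩ := small_elem i hi (i x - c) (by linarith) p hp hroot
  refine ⟨x - e, ?_, by linarith⟩
  rw [map_sub]; linarith

lemma between_right {F K : Type*} [Field F] [LinearOrder F] [IsStrictOrderedRing F] [Field K] [LinearOrder K] [IsStrictOrderedRing K]
    (i : F →+* K) (hi : StrictMono i)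
    (halg : ∀ x : K, ∃ p : Polynomial F, p ≠ 0 ∧ Polynomial.eval₂ i x p = 0)
    (c : K) (x : F) (h : i x < c) : ∃ z : F, i z < c ∧ x < z := by
  obtain ⟨p, hp, hroot⟩ := halg (c - i x)
  obtain ⟨e, he, hie⟩ := small_elem i hi (c - i x) (by linarith) p hp hroot
  refine ⟨x + e, ?_, by linarith⟩
  rw [map_add]; linarith

lemma lt_set_mem_iff {F : Type*} [Field F] [LinearOrder F] [IsStrictOrderedRing F] (ν : ℕ → F) (q : ℕ) :
    q ∈ {p : ℕ | ∃ n k, p = Nat.pair n k ∧ ν n < ν k} ↔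
      ν (Nat.unpair q).1 < ν (Nat.unpair q).2 := by
  constructor
  · rintro ⟨n, k, rfl, hlt⟩
    simpa using hlt
  · intro hlt
    exact ⟨_, _, (Nat.pair_unpair q).symm, hlt⟩

lemma comp_band {α : Type*} [Primcodable α] {f g : α → Bool}
    (hf : Computable f) (hg : Computable g) : Computable fun a => f a && g a := by
  have : (fun a => f a && g a) = fun a => bif f a then g a else false :=
    funext fun a => by cases f a <;> rfl
  rw [this]
  exact Computable.cond hf hg (Computable.const false)

/-- Effective topological consistency: if `i : F → K` is an order-preserving embedding of
order positive fields such that `K` is algebraic over the image of `F` and `ν` is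
reducible to `μ`, then preimages of effectively open sets are effectively open. -/
theorem effOpen_preimage
    {F K : Type*} [Field F] [LinearOrder F] [IsStrictOrderedRing F]
    [Field K] [LinearOrder K] [IsStrictOrderedRing K]
    (ν : ℕ → F) (μ : ℕ → K) (hν : OrderPosPres F ν) (hμ : OrderPosPres K μ)
    (i : F →+* K) (hi : StrictMono i)
    (halg : ∀ x : K, ∃ p : Polynomial F, p ≠ 0 ∧ Polynomial.eval₂ i x p = 0)
    (h : ℕ → ℕ) (hcomp : Computable h) (hred : ∀ n, μ (h n) = i (ν n))
    (U : Set K) (hU : EffOpen μ U) :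
    EffOpen ν (⇑i ⁻¹' U) := by
  obtain ⟨W, hWce, hWlt, hUeq⟩ := hU
  obtain ⟨fW, hfW, hWiff⟩ := ceset_iff_bool.1 hWce
  obtain ⟨fF, hfF, hFiff'⟩ := ceset_iff_bool.1 hν.lt
  obtain ⟨fK, hfK, hKiff'⟩ := ceset_iff_bool.1 hμ.lt
  have hFiff : ∀ q, (∃ m, fF q m = true) ↔ ν (Nat.unpair q).1 < ν (Nat.unpair q).2 :=
    fun q => (hFiff' q).symm.trans (lt_set_mem_iff ν q)
  have hKiff : ∀ a b, (∃ m, fK (Nat.pair a b) m = true) ↔ μ a < μ b := by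
    intro a b
    rw [← hKiff' (Nat.pair a b), lt_set_mem_iff μ, Nat.unpair_pair]
  -- the boolean verifier for the new index set
  set f' : ℕ → ℕ → Bool := fun q s =>
    fF q (Nat.unpair (Nat.unpair s).2).1 &&
    (fW (Nat.unpair s).1 (Nat.unpair (Nat.unpair (Nat.unpair s).2).2).1 &&
    (fK (Nat.pair (Nat.unpair (Nat.unpair s).1).1 (h (Nat.unpair q).1))
        (Nat.unpair (Nat.unpair (Nat.unpair (Nat.unpair s).2).2).2).1 &&
     fK (Nat.pair (h (Nat.unpair q).2) (Nat.unpair (Nat.unpair s).1).2)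
        (Nat.unpair (Nat.unpair (Nat.unpair (Nat.unpair s).2).2).2).2)) with hf'def
  set W' : Set ℕ := {q | ∃ s, f' q s = true} with hW'def
  have hchar : ∀ q, q ∈ W' ↔
      (ν (Nat.unpair q).1 < ν (Nat.unpair q).2 ∧
        ∃ p ∈ W, μ (Nat.unpair p).1 < μ (h (Nat.unpair q).1) ∧
          μ (h (Nat.unpair q).2) < μ (Nat.unpair p).2) := by
    intro q
    constructor
    · rintro ⟨s, hs⟩
      rw [hf'def] at hs
      simp only [Bool.and_eq_true] at hs
      obtain ⟨h1, h2, h3, h4⟩ := hs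
      refine ⟨(hFiff q).1 ⟨_, h1⟩, (Nat.unpair s).1, (hWiff _).2 ⟨_, h2⟩, ?_, ?_⟩
      · exact (hKiff _ _).1 ⟨_, h3⟩
      · exact (hKiff _ _).1 ⟨_, h4⟩
    · rintro ⟨h1, p, hpW, h2, h3⟩
      obtain ⟨m1, hm1⟩ := (hFiff q).2 h1
      obtain ⟨m0, hm0⟩ := (hWiff p).1 hpW
      obtain ⟨m2, hm2⟩ := (hKiff _ _).2 h2
      obtain ⟨m3, hm3⟩ := (hKiff _ _).2 h3
      refine ⟨Nat.pair p (Nat.pair m1 (Nat.pair m0 (Nat.pair m2 m3))), ?_⟩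
      rw [hf'def]
      simp only [Nat.unpair_pair]
      rw [hm1, hm0, hm2, hm3]
      rfl
  have hce : CESet W' := by
    refine ceset_iff_bool.2 ⟨f', ?_, fun n => Iff.rfl⟩
    have cu1 : Computable fun n : ℕ => (Nat.unpair n).1 :=
      Computable.fst.comp Primrec.unpair.to_comp
    have cu2 : Computable fun n : ℕ => (Nat.unpair n).2 :=
      Computable.snd.comp Primrec.unpair.to_comp
    have cq : Computable fun z : ℕ × ℕ => z.1 := Computable.fst
    have cs : Computable fun z : ℕ × ℕ => z.2 := Computable.snd
    have cpair : Computable₂ Nat.pair := Primrec₂.natPair.to_comp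
    refine comp_band (hfF.comp cq (cu1.comp (cu2.comp cs))) (comp_band ?_ (comp_band ?_ ?_))
    · exact hfW.comp (cu1.comp cs) (cu1.comp (cu2.comp (cu2.comp cs)))
    · exact hfK.comp
        (cpair.comp (cu1.comp (cu1.comp cs)) (hcomp.comp (cu1.comp cq)))
        (cu1.comp (cu2.comp (cu2.comp (cu2.comp cs))))
    · exact hfK.comp
        (cpair.comp (hcomp.comp (cu2.comp cq)) (cu2.comp (cu1.comp cs)))
        (cu2.comp (cu2.comp (cu2.comp (cu2.comp cs))))
  refine ⟨W', hce, fun q hq => ((hchar q).1 hq).1, ?_⟩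
  ext x
  simp only [Set.mem_preimage, hUeq, Set.mem_iUnion, Set.mem_Ioo]
  constructor
  · rintro ⟨p, hpW, hx1, hx2⟩
    obtain ⟨y, hy1, hy2⟩ := between_left i hi halg _ x hx1
    obtain ⟨z, hz1, hz2⟩ := between_right i hi halg _ x hx2
    obtain ⟨n, rfl⟩ := hν.surj y
    obtain ⟨k, rfl⟩ := hν.surj z
    refine ⟨Nat.pair n k, ?_, ?_⟩
    · rw [hchar]
      simp only [Nat.unpair_pair]
      exact ⟨lt_trans hy2 hz2, p, hpW, by rw [hred]; exact hy1, by rw [hred]; exact hz1⟩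
    · simp only [Nat.unpair_pair]
      exact ⟨hy2, hz2⟩
  · rintro ⟨q, hq, hx1, hx2⟩
    obtain ⟨-, p, hpW, h2, h3⟩ := (hchar q).1 hq
    refine ⟨p, hpW, ?_, ?_⟩
    · calc μ (Nat.unpair p).1 < μ (h (Nat.unpair q).1) := h2
      _ = i (ν (Nat.unpair q).1) := hred _
      _ < i x := hi hx1
    · calc i x < i (ν (Nat.unpair q).2) := hi hx2
      _ = μ (h (Nat.unpair q).2) := (hred _).symm
      _ < μ (Nat.unpair p).2 := h3
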